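/- Let a, b ∈ ℝ with b ≠ 0 and a > 2(|b|+1)². Then K_{a,b} ∩ ℝ² = ∅; that is, no point of ℝ² has bounded full orbit under the Hénon map f_{a,b}. -/

import Mathlib

noncomputable section

/-- The complex Hénon map `f_{a,b}(x,y) = (x² + a − b y, x)`. -/
def henonMap (a b : ℂ) : ℂ × ℂ → ℂ × ℂ :=
  fun p => (p.1 ^ 2 + a - b * p.2, p.1)

/-- For `b ≠ 0`, the Hénon map `f_{a,b}` as a bijection of `ℂ²`. -/
def henon (a b : ℂ) (hb : b ≠ 0) : Equiv.Perm (ℂ × ℂ) where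
  toFun := henonMap a b
  invFun p := (p.2, (p.2 ^ 2 + a - p.1) / b)
  left_inv p := by
    obtain ⟨x, y⟩ := p
    simp only [henonMap]
    refine Prod.ext rfl ?_
    field_simp
    ring
  right_inv p := by
    obtain ⟨x, y⟩ := p
    simp only [henonMap]
    refine Prod.ext ?_ rfl
    field_simp
    ring

/-- `K_{a,b}`: the set of points of `ℂ²` whose full orbit under `f_{a,b}` is bounded. -/
def henonK (a b : ℂ) (hb : b ≠ 0) : Set (ℂ × ℂ) :=
  {p | Bornology.IsBounded (Set.range fun n : ℤ => ((henon a b hb) ^ n) p)}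

end

/-- For real parameters with `b ≠ 0` and `a > 2(|b|+1)²`, no real point has bounded
full orbit under the Hénon map: `K_{a,b} ∩ ℝ² = ∅`. -/
theorem henonK_no_real_points (a b : ℝ) (hb : b ≠ 0)
    (ha : 2 * (|b| + 1) ^ 2 < a) :
    ∀ x y : ℝ, ((x : ℂ), (y : ℂ)) ∉
      henonK (a : ℂ) (b : ℂ) (Complex.ofReal_ne_zero.mpr hb) := by
  intro x y hmem
  set hb' := Complex.ofReal_ne_zero.mpr hb with hhb'
  set f := henon (a : ℂ) (b : ℂ) hb' with hf
  set p : ℤ → ℂ × ℂ := fun n => (f ^ n) ((x : ℂ), (y : ℂ)) with hp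
  -- the one-step recurrence
  have hstep : ∀ n : ℤ, p (n + 1) = henonMap (a : ℂ) (b : ℂ) (p n) := by
    intro n
    show (f ^ (n + 1)) _ = _
    rw [add_comm, zpow_add, zpow_one, Equiv.Perm.mul_apply]
    rfl
  -- the orbit consists of real points
  have hreal : ∀ n : ℤ, ∃ u v : ℝ, p n = ((u : ℂ), (v : ℂ)) := by
    intro n
    induction n using Int.induction_on with
    | zero => exact ⟨x, y, by simp [hp]⟩
    | succ n ih =>
      obtain ⟨u, v, huv⟩ := ih
      refine ⟨u ^ 2 + a - b * v, u, ?_⟩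
      rw [hstep, huv]
      simp only [henonMap]
      push_cast
      rfl
    | pred n ih =>
      obtain ⟨u, v, huv⟩ := ih
      have h1 : henonMap (a : ℂ) (b : ℂ) (p (-(n : ℤ) - 1)) = ((u : ℂ), (v : ℂ)) := by
        rw [← hstep]; rw [show -(n : ℤ) - 1 + 1 = -(n : ℤ) by ring, huv]
      refine ⟨v, (v ^ 2 + a - u) / b, ?_⟩
      have h2 : (p (-(n : ℤ) - 1)).1 = (v : ℂ) := by
        have := congrArg Prod.snd h1
        simpa [henonMap] using this
      have h3 : (p (-(n : ℤ) - 1)).1 ^ 2 + (a : ℂ) - (b : ℂ) * (p (-(n : ℤ) - 1)).2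
          = (u : ℂ) := by
        have := congrArg Prod.fst h1
        simpa [henonMap] using this
      have h4 : (p (-(n : ℤ) - 1)).2 = (((v ^ 2 + a - u) / b : ℝ) : ℂ) := by
        rw [h2] at h3
        push_cast
        field_simp
        linear_combination -h3
      exact Prod.ext h2 h4
  choose X Y hXY using hreal
  -- real recurrences
  have hXrec : ∀ n : ℤ, X (n + 1) = X n ^ 2 + a - b * Y n := by
    intro n
    have := hstep n
    rw [hXY, hXY] at this
    have h := congrArg Prod.fst this
    simp only [henonMap] at h
    rw [show ((X n : ℂ)) ^ 2 + (a : ℂ) - (b : ℂ) * (Y n : ℂ)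
        = ((X n ^ 2 + a - b * Y n : ℝ) : ℂ) by push_cast; ring] at h
    exact_mod_cast h
  have hYrec : ∀ n : ℤ, Y (n + 1) = X n := by
    intro n
    have := hstep n
    rw [hXY, hXY] at this
    have h := congrArg Prod.snd this
    simp only [henonMap] at h
    exact_mod_cast h
  -- boundedness
  have hB : Bornology.IsBounded (Set.range fun n : ℤ => p n) := hmem
  obtain ⟨C, hC⟩ := hB.exists_norm_le
  have hXC : ∀ n : ℤ, |X n| ≤ C := by
    intro n
    have h1 : ‖p n‖ ≤ C := hC _ (Set.mem_range_self n)
    have h2 : ‖(p n).1‖ ≤ ‖p n‖ := norm_fst_le _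
    rw [hXY n] at h1 h2
    simp only [Complex.norm_real, Real.norm_eq_abs] at h2
    linarith
  -- sup of |X n|
  set M : ℝ := sSup (Set.range fun n : ℤ => |X n|) with hM
  have hbdd : BddAbove (Set.range fun n : ℤ => |X n|) := ⟨C, by rintro _ ⟨n, rfl⟩; exact hXC n⟩
  have hMle : ∀ n : ℤ, |X n| ≤ M := fun n => le_csSup hbdd ⟨n, rfl⟩
  have hM0 : 0 ≤ M := le_trans (abs_nonneg _) (hMle 0)
  have hYle : ∀ n : ℤ, |Y n| ≤ M := by
    intro n
    have := hYrec (n - 1)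
    rw [show n - 1 + 1 = n by ring] at this
    rw [this]; exact hMle _
  -- key inequality
  have hkey : ∀ n : ℤ, X n ^ 2 ≤ (1 + |b|) * M - a := by
    intro n
    have h1 : b * Y n ≤ |b| * M := by
      calc b * Y n ≤ |b * Y n| := le_abs_self _
        _ = |b| * |Y n| := abs_mul _ _
        _ ≤ |b| * M := mul_le_mul_of_nonneg_left (hYle n) (abs_nonneg b)
    have h2 : X n ^ 2 + a - |b| * M ≤ X (n + 1) := by rw [hXrec]; linarith
    have h3 : X (n + 1) ≤ M := le_trans (le_abs_self _) (hMle _)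
    linarith
  have hnn : 0 ≤ (1 + |b|) * M - a := le_trans (sq_nonneg (X 0)) (hkey 0)
  have hMs : M ≤ Real.sqrt ((1 + |b|) * M - a) := by
    apply csSup_le (Set.range_nonempty _)
    rintro _ ⟨n, rfl⟩
    show |X n| ≤ _
    rw [show |X n| = Real.sqrt (X n ^ 2) by rw [Real.sqrt_sq_eq_abs]]
    exact Real.sqrt_le_sqrt (hkey n)
  have hM2 : M ^ 2 ≤ (1 + |b|) * M - a := by
    have := pow_le_pow_left₀ hM0 hMs 2
    rwa [Real.sq_sqrt hnn] at this
  nlinarith [sq_nonneg (M - (|b| + 1)), abs_nonneg b]
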